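/- Let M > 0 and r > 0 and let W : [0,1]² → [0,1] be (M,r)-analytic. Let ℓ be a positive integer with ℓ ≥ 2/r and let p ≥ 1 be an integer. Then there exist an integer m ≤ ℓ²·p and functions φ₁,…,φ_m, ψ₁,…,ψ_m : [0,1] → ℝ such that sup_{(x,y) ∈ [0,1]²} |W(x,y) − Σ_{s=1}^m φ_s(x)·ψ_s(y)| ≤ M·2^{1−p}. -/

import Mathlib

/-- `(M, r)`-analyticity of a graphon `W : [0,1]² → [0,1]`: there are coefficient functions
`c k` with `|c k x y| ≤ M r⁻ᵏ` such that `W` is given, in each variable separately, by the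
corresponding power series of radius `r` around every point. -/
def IsAnalytic (M r : ℝ) (W : ℝ → ℝ → ℝ) : Prop :=
  ∃ c : ℕ → ℝ → ℝ → ℝ,
    (∀ (k : ℕ) (x y : ℝ), x ∈ Set.Icc (0:ℝ) 1 → y ∈ Set.Icc (0:ℝ) 1 →
      |c k x y| ≤ M / r ^ k) ∧
    (∀ x₀ y x : ℝ, x₀ ∈ Set.Icc (0:ℝ) 1 → y ∈ Set.Icc (0:ℝ) 1 → x ∈ Set.Icc (0:ℝ) 1 →
      |x - x₀| < r → W x y = ∑' k : ℕ, c k x₀ y * (x - x₀) ^ k) ∧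
    (∀ y₀ x y : ℝ, y₀ ∈ Set.Icc (0:ℝ) 1 → x ∈ Set.Icc (0:ℝ) 1 → y ∈ Set.Icc (0:ℝ) 1 →
      |y - y₀| < r → W x y = ∑' k : ℕ, c k x y₀ * (y - y₀) ^ k)

/-- Index of the subinterval of `[0,1]` (among `ℓ` equal pieces) containing `x`. -/
noncomputable def idxfun (ℓ : ℕ) (x : ℝ) : ℕ := min (⌊(ℓ:ℝ)*x⌋.toNat) (ℓ-1)

/-- Tail bound for a series dominated by a geometric series. -/
lemma tail_bound (M : ℝ) (f : ℕ → ℝ) (p : ℕ)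
    (hfb : ∀ k, |f k| ≤ M * (1/2)^k) (hfs : Summable f) :
    |(∑' k : ℕ, f k) - ∑ k ∈ Finset.range p, f k| ≤ M * (2:ℝ)^((1:ℤ)-(p:ℤ)) := by
  have hg : Summable (fun k : ℕ => M * (1/2:ℝ)^k) :=
    (summable_geometric_of_lt_one (by norm_num) (by norm_num)).mul_left M
  have key := Summable.sum_add_tsum_nat_add (f := f) p hfs
  have heq : (∑' k : ℕ, f k) - ∑ k ∈ Finset.range p, f k = ∑' k : ℕ, f (k + p) := by
    linarith [key]
  rw [heq]
  have hfa : Summable (fun k : ℕ => |f k|) :=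
    Summable.of_nonneg_of_le (fun k => abs_nonneg _) hfb hg
  have hfa' : Summable (fun k : ℕ => |f (k + p)|) :=
    hfa.comp_injective (add_left_injective p)
  have hg' : Summable (fun k : ℕ => M * (1/2:ℝ)^(k+p)) :=
    hg.comp_injective (add_left_injective p)
  have h1 : |∑' k : ℕ, f (k + p)| ≤ ∑' k : ℕ, |f (k + p)| := by
    simpa [Real.norm_eq_abs] using norm_tsum_le_tsum_norm (f := fun k : ℕ => f (k + p))
      (by simpa [Real.norm_eq_abs] using hfa')
  have h2 : ∑' k : ℕ, |f (k + p)| ≤ ∑' k : ℕ, M * (1/2:ℝ)^(k+p) :=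
    Summable.tsum_le_tsum (fun k => hfb (k + p)) hfa' hg'
  have h3 : ∑' k : ℕ, M * (1/2:ℝ)^(k+p) = M * (1/2)^p * 2 := by
    have hcg : ∀ k : ℕ, M * (1/2:ℝ)^(k+p) = (M * (1/2)^p) * (1/2)^k := by
      intro k; rw [pow_add]; ring
    rw [tsum_congr hcg, tsum_mul_left, tsum_geometric_two]
  have hz : M * (2:ℝ)^((1:ℤ)-(p:ℤ)) = M * (1/2)^p * 2 := by
    rw [zpow_sub₀ (by norm_num : (2:ℝ) ≠ 0), zpow_one, zpow_natCast, one_div, inv_pow]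
    rw [div_eq_mul_inv]
    ring
  linarith

/-- an `(M, r)`-analytic graphon admits, for every integer `ℓ ≥ 2/r` and `p ≥ 1`,
a rank-`(ℓ² p)` approximation of uniform accuracy `M 2^{1−p}`. -/
theorem stmt15 (M r : ℝ) (hM : 0 < M) (hr : 0 < r) (W : ℝ → ℝ → ℝ)
    (hrange : ∀ x y : ℝ, x ∈ Set.Icc (0:ℝ) 1 → y ∈ Set.Icc (0:ℝ) 1 →
      W x y ∈ Set.Icc (0:ℝ) 1)
    (hW : IsAnalytic M r W)
    (ℓ p : ℕ) (hℓ : 1 ≤ ℓ) (hℓr : 2 / r ≤ (ℓ : ℝ)) (hp : 1 ≤ p) :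
    ∃ (m : ℕ) (φ ψ : Fin m → ℝ → ℝ), m ≤ ℓ ^ 2 * p ∧
      ∀ x y : ℝ, x ∈ Set.Icc (0:ℝ) 1 → y ∈ Set.Icc (0:ℝ) 1 →
        |W x y - ∑ s : Fin m, φ s x * ψ s y| ≤ M * (2:ℝ) ^ ((1:ℤ) - p) := by
  obtain ⟨c, hc, hx, -⟩ := hW
  have hℓ0 : (0:ℝ) < ℓ := by exact_mod_cast hℓ
  refine ⟨ℓ*p,
    fun s x => if (((finProdFinEquiv.symm s).1 : Fin ℓ) : ℕ) = idxfun ℓ x then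
      (x - (((finProdFinEquiv.symm s).1 : ℕ) : ℝ)/ℓ)^(((finProdFinEquiv.symm s).2 : ℕ)) else 0,
    fun s y => c ((finProdFinEquiv.symm s).2 : ℕ) ((((finProdFinEquiv.symm s).1 : ℕ) : ℝ)/ℓ) y,
    ?_, ?_⟩
  · have : ℓ ≤ ℓ^2 := by nlinarith
    exact Nat.mul_le_mul_right p this
  intro x y hxm hym
  set I : ℕ := idxfun ℓ x with hIdef
  have hI : I < ℓ := lt_of_le_of_lt (min_le_right _ _) (Nat.sub_lt hℓ one_pos)
  set x₀ : ℝ := (I : ℝ)/ℓ with hx0def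
  have hx0mem : x₀ ∈ Set.Icc (0:ℝ) 1 := by
    constructor
    · positivity
    · rw [div_le_one hℓ0]
      exact_mod_cast hI.le
  have hxlb : x₀ ≤ x := by
    rw [hx0def, div_le_iff₀ hℓ0]
    have h1 : (I:ℝ) ≤ (⌊(ℓ:ℝ)*x⌋.toNat : ℝ) := by
      exact_mod_cast min_le_left _ _
    have h2 : ((⌊(ℓ:ℝ)*x⌋.toNat : ℤ) : ℝ) ≤ (ℓ:ℝ)*x := by
      rw [Int.toNat_of_nonneg (Int.floor_nonneg.2 (mul_nonneg hℓ0.le hxm.1))]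
      exact Int.floor_le _
    push_cast at h2 ⊢
    linarith [mul_comm x (ℓ:ℝ)]
  have hxub : x - x₀ ≤ 1/ℓ := by
    have key : (ℓ:ℝ)*x ≤ I + 1 := by
      rcases le_or_gt (⌊(ℓ:ℝ)*x⌋.toNat) (ℓ-1) with h | h
      · have hIeq : I = ⌊(ℓ:ℝ)*x⌋.toNat := min_eq_left h
        have : (ℓ:ℝ)*x < ⌊(ℓ:ℝ)*x⌋ + 1 := Int.lt_floor_add_one _
        rw [hIeq]
        have h3 : ((⌊(ℓ:ℝ)*x⌋.toNat : ℤ) : ℝ) = (⌊(ℓ:ℝ)*x⌋ : ℝ) := by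
          rw [Int.toNat_of_nonneg (Int.floor_nonneg.2 (mul_nonneg hℓ0.le hxm.1))]
        push_cast at h3 ⊢
        linarith
      · have hIeq : I = ℓ - 1 := min_eq_right h.le
        rw [hIeq]
        have : ((ℓ-1 : ℕ) : ℝ) = (ℓ:ℝ) - 1 := by
          push_cast [Nat.cast_sub hℓ]; ring
        rw [this]
        nlinarith [hxm.2]
    rw [sub_le_iff_le_add, hx0def]
    rw [← add_div, le_div_iff₀ hℓ0]
    linarith [mul_comm x (ℓ:ℝ)]
  have hhalf : 1/(ℓ:ℝ) ≤ r/2 := by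
    rw [div_le_div_iff₀ hℓ0 two_pos]
    rw [div_le_iff₀ hr] at hℓr
    linarith
  have habs : |x - x₀| ≤ r/2 := by
    rw [abs_of_nonneg (by linarith)]
    linarith
  -- power series expansion
  have hWx : W x y = ∑' k : ℕ, c k x₀ y * (x - x₀) ^ k :=
    hx x₀ y x hx0mem hym hxm (lt_of_le_of_lt habs (by linarith))
  set f : ℕ → ℝ := fun k => c k x₀ y * (x - x₀) ^ k with hfdef
  have hfb : ∀ k, |f k| ≤ M * (1/2)^k := by
    intro k
    have h1 : |c k x₀ y| ≤ M / r^k := hc k x₀ y hx0mem hym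
    have h2 : |x - x₀|^k ≤ (r/2)^k := pow_le_pow_left₀ (abs_nonneg _) habs k
    calc |f k| = |c k x₀ y| * |x - x₀|^k := by rw [hfdef]; simp [abs_mul, abs_pow]
      _ ≤ (M / r^k) * (r/2)^k := by
          apply mul_le_mul h1 h2 (by positivity) (by positivity)
      _ = M * (1/2)^k := by
          have h : r^k ≠ 0 := by positivity
          field_simp [div_pow]
          rw [div_eq_mul_one_div r 2, mul_pow]
  have hg : Summable (fun k : ℕ => M * (1/2:ℝ)^k) :=
    (summable_geometric_of_lt_one (by norm_num) (by norm_num)).mul_left M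
  have hfs : Summable f := by
    apply Summable.of_abs
    exact Summable.of_nonneg_of_le (fun k => abs_nonneg _) hfb hg
  -- sum identity
  have hsum : ∑ s : Fin (ℓ*p),
      (if (((finProdFinEquiv.symm s).1 : Fin ℓ) : ℕ) = idxfun ℓ x then
        (x - (((finProdFinEquiv.symm s).1 : ℕ) : ℝ)/ℓ)^(((finProdFinEquiv.symm s).2 : ℕ)) else 0)
        * c ((finProdFinEquiv.symm s).2 : ℕ) ((((finProdFinEquiv.symm s).1 : ℕ) : ℝ)/ℓ) y
      = ∑ k ∈ Finset.range p, f k := by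
    rw [← Equiv.sum_comp (finProdFinEquiv : Fin ℓ × Fin p ≃ Fin (ℓ*p))]
    simp only [Equiv.symm_apply_apply]
    rw [Fintype.sum_prod_type]
    rw [Finset.sum_eq_single (⟨I, hI⟩ : Fin ℓ)]
    · simp only [← hIdef]
      rw [← Fin.sum_univ_eq_sum_range (fun k => f k) p]
      apply Finset.sum_congr rfl
      intro k _
      simp [hfdef, hx0def, mul_comm]
    · intro i _ hne
      apply Finset.sum_eq_zero
      intro k _
      have : ¬ ((i : ℕ) = I) := by
        intro h; exact hne (Fin.ext h)
      simp [← hIdef, this]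
    · intro h; exact absurd (Finset.mem_univ _) h
  rw [hsum, hWx]
  exact tail_bound M f p hfb hfs
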